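/- arXiv:2501.08740 — 3 statements merged into one kernel-verified Lean document; each statement's English description precedes it below -/
import Mathlib

section
/- Let g be a Lie algebra with almost complex structure J. Note a_1(J) = {X : [X,g] = 0 and [JX,g] = 0} is contained in the center of g. If J is nilpotent (a_k(J) = g for some k), then g is a nilpotent Lie algebra. -/
theorem nilpotent_acs_implies_nilpotent_lie_algebra
    {g : Type*} [LieRing g] [LieAlgebra ℝ g]
    (J : g →ₗ[ℝ] g) (hJ : ∀ X : g, J (J X) = -X)
    (a : ℕ → Submodule ℝ g)
    (ha0 : a 0 = ⊥)
    (haS : ∀ k, ∀ X : g,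
      X ∈ a (k + 1) ↔ (∀ Y : g, ⁅X, Y⁆ ∈ a k) ∧ (∀ Y : g, ⁅J X, Y⁆ ∈ a k)) :
    (∀ X : g, X ∈ a 1 → X ∈ LieAlgebra.center ℝ g) ∧
      ((∃ k, a k = ⊤) → LieRing.IsNilpotent g) := by
  have key : ∀ k, ∀ X : g, X ∈ a k →
      X ∈ (⊥ : LieSubmodule ℝ g g).ucs k := by
    intro k
    induction k with
    | zero => intro X hX; rw [ha0] at hX; simpa using hX
    | succ k ih =>
      intro X hX
      rw [LieSubmodule.ucs_succ, LieSubmodule.mem_normalizer]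
      rw [haS] at hX
      intro Y
      have : ⁅X, Y⁆ ∈ (⊥ : LieSubmodule ℝ g g).ucs k := ih _ (hX.1 Y)
      have h2 : ⁅Y, X⁆ = -⁅X, Y⁆ := by rw [← lie_skew]
      rw [h2]
      exact neg_mem this
  constructor
  · intro X hX
    rw [LieModule.mem_maxTrivSubmodule]
    intro Y
    rw [haS] at hX
    have := hX.1 Y
    rw [ha0] at this
    simp only [Submodule.mem_bot] at this
    rw [← lie_skew, this, neg_zero]
  · rintro ⟨k, hk⟩
    refine (LieModule.isNilpotent_iff_exists_ucs_eq_top ℝ).mpr ⟨k, ?_⟩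
    rw [eq_top_iff]
    intro X _
    exact key k X (hk ▸ Submodule.mem_top)
end

section
/- Let g be the complex Heisenberg Lie algebra with standard complex structure J (as above). The span V of the image of the Nijenhuis tensor of the standard J is zero, whereas for the structure J₀ (Je₁=e₂, Je₃=e₅, Je₄=e₆ and J² = -id) the span of the image of N_{J₀} has real dimension at least 2. -/
set_option maxHeartbeats 1000000 in
theorem nijenhuis_rank_standard_vs_J0
    {g : Type*} [LieRing g] [LieAlgebra ℝ g]
    (b : Module.Basis (Fin 6) ℝ g)
    (h02 : ⁅b 0, b 2⁆ = -b 4) (h13 : ⁅b 1, b 3⁆ = b 4)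
    (h03 : ⁅b 0, b 3⁆ = -b 5) (h12 : ⁅b 1, b 2⁆ = -b 5)
    (hzero : ∀ i j : Fin 6,
      ((i, j) : Fin 6 × Fin 6) ∉
        ({(0, 2), (2, 0), (1, 3), (3, 1), (0, 3), (3, 0), (1, 2), (2, 1)} :
          Set (Fin 6 × Fin 6)) → ⁅b i, b j⁆ = 0)
    (J : g →ₗ[ℝ] g) (hJsq : ∀ X : g, J (J X) = -X)
    (hJ0 : J (b 0) = b 1) (hJ1 : J (b 1) = -b 0)
    (hJ2 : J (b 2) = b 3) (hJ3 : J (b 3) = -b 2)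
    (hJ4 : J (b 4) = b 5) (hJ5 : J (b 5) = -b 4)
    (J₀ : g →ₗ[ℝ] g) (hJ₀sq : ∀ X : g, J₀ (J₀ X) = -X)
    (hJ₀0 : J₀ (b 0) = b 1) (hJ₀1 : J₀ (b 1) = -b 0)
    (hJ₀2 : J₀ (b 2) = b 4) (hJ₀4 : J₀ (b 4) = -b 2)
    (hJ₀3 : J₀ (b 3) = b 5) (hJ₀5 : J₀ (b 5) = -b 3)
    (N N₀ : g → g → g)
    (hN : ∀ X Y : g, N X Y = ⁅J X, J Y⁆ - J ⁅J X, Y⁆ - J ⁅X, J Y⁆ - ⁅X, Y⁆)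
    (hN₀ : ∀ X Y : g, N₀ X Y = ⁅J₀ X, J₀ Y⁆ - J₀ ⁅J₀ X, Y⁆ - J₀ ⁅X, J₀ Y⁆ - ⁅X, Y⁆) :
    Submodule.span ℝ {v : g | ∃ X Y : g, v = N X Y} = ⊥ ∧
      2 ≤ Module.finrank ℝ (Submodule.span ℝ {v : g | ∃ X Y : g, v = N₀ X Y}) := by
  classical
  haveI : Module.Finite ℝ g := Module.Finite.of_basis b
  have h20 : ⁅b 2, b 0⁆ = b 4 := by rw [← lie_skew, h02, neg_neg]
  have h31 : ⁅b 3, b 1⁆ = -b 4 := by rw [← lie_skew, h13]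
  have h30 : ⁅b 3, b 0⁆ = b 5 := by rw [← lie_skew, h03, neg_neg]
  have h21 : ⁅b 2, b 1⁆ = b 5 := by rw [← lie_skew, h12, neg_neg]
  have z00 : ⁅b 0, b 0⁆ = 0 := hzero 0 0 (by simp [Prod.ext_iff])
  have z01 : ⁅b 0, b 1⁆ = 0 := hzero 0 1 (by simp [Prod.ext_iff])
  have z04 : ⁅b 0, b 4⁆ = 0 := hzero 0 4 (by simp [Prod.ext_iff])
  have z05 : ⁅b 0, b 5⁆ = 0 := hzero 0 5 (by simp [Prod.ext_iff])
  have z10 : ⁅b 1, b 0⁆ = 0 := hzero 1 0 (by simp [Prod.ext_iff])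
  have z11 : ⁅b 1, b 1⁆ = 0 := hzero 1 1 (by simp [Prod.ext_iff])
  have z14 : ⁅b 1, b 4⁆ = 0 := hzero 1 4 (by simp [Prod.ext_iff])
  have z15 : ⁅b 1, b 5⁆ = 0 := hzero 1 5 (by simp [Prod.ext_iff])
  have z22 : ⁅b 2, b 2⁆ = 0 := hzero 2 2 (by simp [Prod.ext_iff])
  have z23 : ⁅b 2, b 3⁆ = 0 := hzero 2 3 (by simp [Prod.ext_iff])
  have z24 : ⁅b 2, b 4⁆ = 0 := hzero 2 4 (by simp [Prod.ext_iff])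
  have z25 : ⁅b 2, b 5⁆ = 0 := hzero 2 5 (by simp [Prod.ext_iff])
  have z32 : ⁅b 3, b 2⁆ = 0 := hzero 3 2 (by simp [Prod.ext_iff])
  have z33 : ⁅b 3, b 3⁆ = 0 := hzero 3 3 (by simp [Prod.ext_iff])
  have z34 : ⁅b 3, b 4⁆ = 0 := hzero 3 4 (by simp [Prod.ext_iff])
  have z35 : ⁅b 3, b 5⁆ = 0 := hzero 3 5 (by simp [Prod.ext_iff])
  have z40 : ⁅b 4, b 0⁆ = 0 := hzero 4 0 (by simp [Prod.ext_iff])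
  have z41 : ⁅b 4, b 1⁆ = 0 := hzero 4 1 (by simp [Prod.ext_iff])
  have z42 : ⁅b 4, b 2⁆ = 0 := hzero 4 2 (by simp [Prod.ext_iff])
  have z43 : ⁅b 4, b 3⁆ = 0 := hzero 4 3 (by simp [Prod.ext_iff])
  have z44 : ⁅b 4, b 4⁆ = 0 := hzero 4 4 (by simp [Prod.ext_iff])
  have z45 : ⁅b 4, b 5⁆ = 0 := hzero 4 5 (by simp [Prod.ext_iff])
  have z50 : ⁅b 5, b 0⁆ = 0 := hzero 5 0 (by simp [Prod.ext_iff])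
  have z51 : ⁅b 5, b 1⁆ = 0 := hzero 5 1 (by simp [Prod.ext_iff])
  have z52 : ⁅b 5, b 2⁆ = 0 := hzero 5 2 (by simp [Prod.ext_iff])
  have z53 : ⁅b 5, b 3⁆ = 0 := hzero 5 3 (by simp [Prod.ext_iff])
  have z54 : ⁅b 5, b 4⁆ = 0 := hzero 5 4 (by simp [Prod.ext_iff])
  have z55 : ⁅b 5, b 5⁆ = 0 := hzero 5 5 (by simp [Prod.ext_iff])
  obtain ⟨f, hfapp⟩ : ∃ f : g →ₗ[ℝ] g →ₗ[ℝ] g,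
      ∀ X Y : g, f X Y = ⁅J X, J Y⁆ - J ⁅J X, Y⁆ - J ⁅X, J Y⁆ - ⁅X, Y⁆ :=
    ⟨LinearMap.mk₂ ℝ (fun X Y => ⁅J X, J Y⁆ - J ⁅J X, Y⁆ - J ⁅X, J Y⁆ - ⁅X, Y⁆)
      (by intro X X' Y; simp only [map_add, add_lie, lie_add]; abel)
      (by intro c X Y; simp only [map_smul, smul_lie, lie_smul, smul_sub])
      (by intro X Y Y'; simp only [map_add, add_lie, lie_add]; abel)
      (by intro c X Y; simp only [map_smul, smul_lie, lie_smul, smul_sub]),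
     fun X Y => rfl⟩
  have hf : f = 0 := by
    refine b.ext fun i => b.ext fun j => ?_
    fin_cases i <;> fin_cases j <;>
      simp [hfapp, hJ0, hJ1, hJ2, hJ3, hJ4, hJ5, h02, h13, h03, h12, h20, h31, h30, h21, z00, z01, z04, z05, z10, z11, z14, z15, z22, z23, z24, z25, z32, z33, z34, z35, z40, z41, z42, z43, z44, z45, z50, z51, z52, z53, z54, z55]
  have hNzero : ∀ X Y : g, N X Y = 0 := by
    intro X Y
    rw [hN, ← hfapp X Y, hf]; rfl
  constructor
  · rw [Submodule.span_eq_bot]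
    rintro v ⟨X, Y, rfl⟩
    exact hNzero X Y
  · have hu : N₀ (b 0) (b 3) = b 2 + b 5 := by
      rw [hN₀]
      simp [hJ₀0, hJ₀1, hJ₀2, hJ₀3, hJ₀4, hJ₀5, h13, h03, z15, z05]
      try abel
    have hw : N₀ (b 0) (b 2) = b 4 - b 3 := by
      rw [hN₀]
      simp [hJ₀0, hJ₀1, hJ₀2, hJ₀3, hJ₀4, hJ₀5, h12, h02, z14, z04]
      try abel
    have hli : LinearIndependent ℝ ![b 2 + b 5, b 4 - b 3] := by
      rw [LinearIndependent.pair_iff]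
      intro s t hst
      have h2 := congrArg (fun v => b.repr v 2) hst
      have h3 := congrArg (fun v => b.repr v 3) hst
      simp [Finsupp.single_apply] at h2 h3
      exact ⟨h2, by linarith⟩
    have hle : Submodule.span ℝ (Set.range ![b 2 + b 5, b 4 - b 3]) ≤
        Submodule.span ℝ {v : g | ∃ X Y : g, v = N₀ X Y} := by
      refine Submodule.span_mono ?_
      rintro x ⟨i, rfl⟩
      fin_cases i
      · exact ⟨b 0, b 3, hu.symm⟩
      · exact ⟨b 0, b 2, hw.symm⟩
    have h2eq : Module.finrank ℝ (Submodule.span ℝ (Set.range ![b 2 + b 5, b 4 - b 3])) = 2 := by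
      rw [finrank_span_eq_card hli]
      simp
    calc 2 = Module.finrank ℝ (Submodule.span ℝ (Set.range ![b 2 + b 5, b 4 - b 3])) := h2eq.symm
      _ ≤ _ := Submodule.finrank_mono hle
end

section
/- Let J be the almost complex structure on the third real vector space direct sum ℝ⁶ underlying the complex Heisenberg Lie algebra defined previously (J₀: e₁↦e₂, e₃↦e₅, e₄↦e₆). Then [g^{1,0}, g^{1,0}] ⊄ g^{1,0} in g ⊗ ℂ; explicitly, the bracket of the (1,0)-vectors e₁ - i e₂ and e₃ - i e₅ has nonzero component in g^{0,1}. -/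
open scoped TensorProduct

theorem J0_holomorphic_vectors_bracket_escapes
    {g : Type*} [LieRing g] [LieAlgebra ℝ g]
    (b : Module.Basis (Fin 6) ℝ g)
    (h02 : ⁅b 0, b 2⁆ = -b 4) (h13 : ⁅b 1, b 3⁆ = b 4)
    (h03 : ⁅b 0, b 3⁆ = -b 5) (h12 : ⁅b 1, b 2⁆ = -b 5)
    (hzero : ∀ i j : Fin 6,
      ((i, j) : Fin 6 × Fin 6) ∉
        ({(0, 2), (2, 0), (1, 3), (3, 1), (0, 3), (3, 0), (1, 2), (2, 1)} :
          Set (Fin 6 × Fin 6)) → ⁅b i, b j⁆ = 0)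
    (J₀ : g →ₗ[ℝ] g) (hJ₀sq : ∀ X : g, J₀ (J₀ X) = -X)
    (hJ₀0 : J₀ (b 0) = b 1) (hJ₀1 : J₀ (b 1) = -b 0)
    (hJ₀2 : J₀ (b 2) = b 4) (hJ₀4 : J₀ (b 4) = -b 2)
    (hJ₀3 : J₀ (b 3) = b 5) (hJ₀5 : J₀ (b 5) = -b 3) :
    ⁅((1 : ℂ) ⊗ₜ[ℝ] b 0 - Complex.I ⊗ₜ[ℝ] b 1 : ℂ ⊗[ℝ] g),
        (1 : ℂ) ⊗ₜ[ℝ] b 2 - Complex.I ⊗ₜ[ℝ] b 4⁆ ∉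
      Set.range (fun X : g => (1 : ℂ) ⊗ₜ[ℝ] X - Complex.I ⊗ₜ[ℝ] (J₀ X)) := by
  rintro ⟨X, hX⟩
  have h04 : ⁅b 0, b 4⁆ = 0 := hzero 0 4 (by decide)
  have h14 : ⁅b 1, b 4⁆ = 0 := hzero 1 4 (by decide)
  have hbr : ⁅((1 : ℂ) ⊗ₜ[ℝ] b 0 - Complex.I ⊗ₜ[ℝ] b 1 : ℂ ⊗[ℝ] g),
        (1 : ℂ) ⊗ₜ[ℝ] b 2 - Complex.I ⊗ₜ[ℝ] b 4⁆ =
      -((1 : ℂ) ⊗ₜ[ℝ] b 4) + Complex.I ⊗ₜ[ℝ] b 5 := by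
    simp only [lie_sub, sub_lie]
    rw [LieAlgebra.ExtendScalars.bracket_tmul, LieAlgebra.ExtendScalars.bracket_tmul,
      LieAlgebra.ExtendScalars.bracket_tmul, LieAlgebra.ExtendScalars.bracket_tmul,
      h02, h04, h12, h14]
    simp [TensorProduct.tmul_neg]
  rw [hbr] at hX
  set c := b.repr X with hc
  have hXs : X = ∑ k, c k • b k := (b.sum_repr X).symm
  have hJX : J₀ X = c 0 • b 1 - c 1 • b 0 + c 2 • b 4 - c 4 • b 2 + c 3 • b 5 - c 5 • b 3 := by
    conv_lhs => rw [hXs]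
    rw [Fin.sum_univ_six]
    simp [hJ₀0, hJ₀1, hJ₀2, hJ₀3, hJ₀4, hJ₀5, smul_neg]
    abel
  -- apply base change basis repr
  have e4 := congrArg (fun v => (b.baseChange ℂ).repr v 4) hX
  have e2 := congrArg (fun v => (b.baseChange ℂ).repr v 2) hX
  simp only [map_sub, map_add, map_neg, Finsupp.sub_apply, Finsupp.add_apply, Finsupp.neg_apply,
    Module.Basis.baseChange_repr_tmul, hJX, map_smul, Finsupp.smul_apply, Module.Basis.repr_self,
    Finsupp.single_apply] at e4 e2
  simp only [show ((1:Fin 6)=2)=False by simp, show ((0:Fin 6)=2)=False by simp, show ((4:Fin 6)=2)=False by simp, show ((5:Fin 6)=2)=False by simp, show ((3:Fin 6)=2)=False by simp, show ((1:Fin 6)=4)=False by simp, show ((0:Fin 6)=4)=False by simp, show ((2:Fin 6)=4)=False by simp, show ((5:Fin 6)=4)=False by simp, show ((3:Fin 6)=4)=False by simp, if_false, Complex.ofReal_zero, zero_sub, sub_zero, add_zero, zero_add, neg_zero, sub_neg_eq_add] at e4 e2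
  rw [← hc] at e4 e2
  simp [Complex.ext_iff] at e4 e2
  rw [e2.2] at e4
  norm_num at e4
end
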